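/- arXiv:1304.6292 — 2 statements merged into one kernel-verified Lean document; each statement's English description precedes it below -/
import Mathlib

section
/- (Extended Rogers lemma) Let $X$ be a smooth manifold, $\beta$ an $n$-form on $X$ (not necessarily closed), and $v_1, \ldots, v_k$ vector fields with $k \geq 1$. Then $(-1)^k d\,\iota_{v_1 \wedge \cdots \wedge v_k}\beta = \sum_{1 \le i < j \le k} (-1)^{i+j} \iota_{[v_i,v_j] \wedge v_1 \wedge \cdots \wedge \hat v_i \wedge \cdots \wedge \hat v_j \wedge \cdots \wedge v_k}\beta + \sum_{i=1}^k (-1)^i \iota_{v_1 \wedge \cdots \wedge \hat v_i \wedge \cdots \wedge v_k}\mathcal{L}_{v_i}\beta + \iota_{v_1 \wedge \cdots \wedge v_k} d\beta$. -/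
/-- An abstract (ungraded) Cartan calculus: a Lie algebra `V` of vector fields
acting on a module `Ω` of differential forms by interior products `ι`, together
with the de Rham differential `d`, satisfying the standard Cartan identities
(`d² = 0`, `ι_v ι_v = 0` and `ι_{[u,v]} = [𝓛_u, ι_v]` with
`𝓛_v = d ∘ ι_v + ι_v ∘ d`). -/
structure CartanModule (V : Type*) [LieRing V] [LieAlgebra ℝ V]
    (Ω : Type*) [AddCommGroup Ω] [Module ℝ Ω] where
  d : Ω →ₗ[ℝ] Ω
  ι : V →ₗ[ℝ] Ω →ₗ[ℝ] Ω
  d_sq : ∀ α : Ω, d (d α) = 0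
  ι_ι : ∀ (v : V) (α : Ω), ι v (ι v α) = 0
  cartan_comm : ∀ (u v : V) (α : Ω),
    ι ⁅u, v⁆ α =
      (d (ι u (ι v α)) + ι u (d (ι v α))) - ι v (d (ι u α) + ι u (d α))

namespace CartanModule

variable {V : Type*} [LieRing V] [LieAlgebra ℝ V]
  {Ω : Type*} [AddCommGroup Ω] [Module ℝ Ω]

/-- The Lie derivative along a vector field, via Cartan's magic formula. -/
def lieD (C : CartanModule V Ω) (v : V) (α : Ω) : Ω :=
  C.d (C.ι v α) + C.ι v (C.d α)

/-- Iterated interior product with a decomposable multivector field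
`v₁ ∧ ⋯ ∧ v_k` (encoded as the list `[v₁, …, v_k]`):
`ι_{v₁ ∧ ⋯ ∧ v_k} = ι_{v_k} ∘ ⋯ ∘ ι_{v₁}`. -/
def ιList (C : CartanModule V Ω) : List V → Ω → Ω
  | [], α => α
  | v :: l, α => C.ιList l (C.ι v α)

variable (C : CartanModule V Ω)

lemma ιList_nil (α : Ω) : C.ιList [] α = α := rfl

lemma ιList_cons (v : V) (l : List V) (α : Ω) :
    C.ιList (v :: l) α = C.ιList l (C.ι v α) := rfl

lemma ιList_add (l : List V) (a b : Ω) :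
    C.ιList l (a + b) = C.ιList l a + C.ιList l b := by
  induction l generalizing a b with
  | nil => rfl
  | cons v l ih => simp [ιList_cons, map_add, ih]

lemma ιList_neg (l : List V) (a : Ω) : C.ιList l (-a) = -C.ιList l a := by
  induction l generalizing a with
  | nil => rfl
  | cons v l ih => simp [ιList_cons, map_neg, ih]

lemma ιList_sub (l : List V) (a b : Ω) :
    C.ιList l (a - b) = C.ιList l a - C.ιList l b := by
  rw [sub_eq_add_neg, ιList_add, ιList_neg, sub_eq_add_neg]

lemma ι_anticomm (u v : V) (α : Ω) :
    C.ι u (C.ι v α) = - C.ι v (C.ι u α) := by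
  have h := C.ι_ι (u + v) α
  simp only [map_add, LinearMap.add_apply] at h
  rw [C.ι_ι u, C.ι_ι v] at h
  linear_combination (norm := abel) h

lemma d_ι (v : V) (β : Ω) :
    C.d (C.ι v β) = C.lieD v β - C.ι v (C.d β) := by
  rw [lieD]; abel

lemma lieD_ι (u v : V) (β : Ω) :
    C.lieD u (C.ι v β) = C.ι ⁅u, v⁆ β + C.ι v (C.lieD u β) := by
  rw [lieD, lieD, C.cartan_comm u v β, map_add]
  abel

lemma rogers_aux (l : List V) (β : Ω) :
    ((-1 : ℝ) ^ l.length) • C.d (C.ιList l β)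
      = (∑ i : Fin l.length, ∑ j : Fin l.length,
          if (i : ℕ) < (j : ℕ) then
            ((-1 : ℝ) ^ ((i : ℕ) + 1 + ((j : ℕ) + 1))) •
              C.ιList (⁅l.get i, l.get j⁆ :: ((l.eraseIdx (j : ℕ)).eraseIdx (i : ℕ))) β
          else 0)
        + (∑ i : Fin l.length,
            ((-1 : ℝ) ^ ((i : ℕ) + 1)) • C.ιList (l.eraseIdx (i : ℕ)) (C.lieD (l.get i) β))
        + C.ιList l (C.d β) := by
  induction l generalizing β with
  | nil => simp [ιList_nil]
  | cons v l ih =>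
    simp only [List.length_cons]
    rw [ιList_cons, pow_succ, mul_neg_one, neg_smul, ih (C.ι v β)]
    simp only [Fin.sum_univ_succ, Fin.val_zero, Fin.val_succ, Fin.isValue,
      List.get_cons_zero, List.get_cons_succ, List.eraseIdx_cons_zero, List.eraseIdx_cons_succ,
      Nat.succ_lt_succ_iff, Nat.zero_lt_succ, if_true, Nat.not_lt_zero, if_false,
      Finset.sum_const_zero, zero_add, add_zero, ιList_cons,
      C.d_ι, C.lieD_ι, C.ι_anticomm _ v, ιList_add, ιList_sub, ιList_neg, smul_add, smul_sub,
      smul_neg, Finset.sum_add_distrib, pow_succ, pow_zero, one_mul, mul_neg_one, neg_neg,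
      neg_smul, neg_add]
    have getsucc : ∀ (x : Fin l.length), (v :: l).get x.succ = l.get x := fun _ => rfl
    have skew : ∀ u : V, (C.ι ⁅u, v⁆) β = -((C.ι ⁅v, u⁆) β) := by
      intro u
      rw [← lie_skew, map_neg, LinearMap.neg_apply]
    simp only [getsucc, skew, ιList_neg, smul_neg, ← Finset.sum_neg_distrib,
      apply_ite (fun x : Ω => -x), neg_zero, neg_neg, one_smul, pow_add, pow_one, pow_zero,
      one_mul, mul_neg_one, neg_mul, neg_neg, neg_smul, neg_sub, smul_neg]
    simp only [mul_neg, neg_smul, neg_neg]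
    abel

end CartanModule

/-- extended Rogers lemma.  For an `n`-form `β` (not necessarily
closed) and vector fields `v₁, …, v_k` (`k ≥ 1`, encoded as a nonempty list `l`):
`(-1)^k d ι_{v₁∧⋯∧v_k} β
  = ∑_{i<j} (-1)^{i+j} ι_{[v_i,v_j] ∧ v₁ ∧ ⋯ ∧ v̂_i ∧ ⋯ ∧ v̂_j ∧ ⋯ ∧ v_k} β
    + ∑_i (-1)^i ι_{v₁ ∧ ⋯ ∧ v̂_i ∧ ⋯ ∧ v_k} 𝓛_{v_i} β
    + ι_{v₁ ∧ ⋯ ∧ v_k} dβ`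
(indices in the signs are 1-based as in the paper; list indices are 0-based). -/
theorem rogers_lemma
    {V : Type*} [LieRing V] [LieAlgebra ℝ V]
    {Ω : Type*} [AddCommGroup Ω] [Module ℝ Ω]
    (C : CartanModule V Ω) (l : List V) (hl : l ≠ []) (β : Ω) :
    ((-1 : ℝ) ^ l.length) • C.d (C.ιList l β)
      = (∑ i : Fin l.length, ∑ j : Fin l.length,
          if (i : ℕ) < (j : ℕ) then
            ((-1 : ℝ) ^ ((i : ℕ) + 1 + ((j : ℕ) + 1))) •
              C.ιList (⁅l.get i, l.get j⁆ :: ((l.eraseIdx (j : ℕ)).eraseIdx (i : ℕ))) β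
          else 0)
        + (∑ i : Fin l.length,
            ((-1 : ℝ) ^ ((i : ℕ) + 1)) • C.ιList (l.eraseIdx (i : ℕ)) (C.lieD (l.get i) β))
        + C.ιList l (C.d β) := by
  exact C.rogers_aux l β
end

section
/- Let $X$ be a smooth manifold and $\omega$ a closed 3-form. For vector fields $v_1, v_2, v_3$ and 1-forms $\theta_1, \theta_2, \theta_3$ on $X$, with the Courant-type binary bracket $\llbracket v_1+\theta_1, v_2+\theta_2\rrbracket = [v_1,v_2] + \mathcal{L}_{v_1}\theta_2 - \mathcal{L}_{v_2}\theta_1 - \tfrac{1}{2}d(\iota_{v_1}\theta_2 - \iota_{v_2}\theta_1) - \iota_{v_1\wedge v_2}\omega$ and the pairing $\langle v_1+\theta_1, v_2+\theta_2\rangle = \iota_{v_1}\theta_2 + \iota_{v_2}\theta_1$, the Jacobiator is exact: $\llbracket\llbracket e_1, e_2\rrbracket, e_3\rrbracket + \llbracket\llbracket e_2, e_3\rrbracket, e_1\rrbracket + \llbracket\llbracket e_3, e_1\rrbracket, e_2\rrbracket = \tfrac{1}{6}\, d\big(\langle\llbracket e_1,e_2\rrbracket, e_3\rangle + \langle\llbracket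 e_2,e_3\rrbracket, e_1\rangle + \langle\llbracket e_3,e_1\rrbracket, e_2\rangle\big)$ up to the homotopy term, i.e., the failure of the Jacobi identity is an exact 1-form. -/
namespace CartanModule

variable {V : Type*} [LieRing V] [LieAlgebra ℝ V]
  {Ω : Type*} [AddCommGroup Ω] [Module ℝ Ω]

/-- The `ω`-twisted Courant bracket on sections `v + θ` of `TX ⊕ T*X`:
`⟦v₁+θ₁, v₂+θ₂⟧ = [v₁,v₂] + 𝓛_{v₁}θ₂ - 𝓛_{v₂}θ₁ - ½ d(ι_{v₁}θ₂ - ι_{v₂}θ₁)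
 - ι_{v₁∧v₂}ω`. -/
noncomputable def courantBracket (C : CartanModule V Ω) (ω : Ω) (p q : V × Ω) : V × Ω :=
  (⁅p.1, q.1⁆,
    C.lieD p.1 q.2 - C.lieD q.1 p.2
      - (2 : ℝ)⁻¹ • C.d (C.ι p.1 q.2 - C.ι q.1 p.2)
      - C.ι q.1 (C.ι p.1 ω))

/-- The natural symmetric pairing `⟨v₁+θ₁, v₂+θ₂⟩ = ι_{v₁}θ₂ + ι_{v₂}θ₁` on
sections of `TX ⊕ T*X`. -/
def courantPairing (C : CartanModule V Ω) (p q : V × Ω) : Ω :=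
  C.ι p.1 q.2 + C.ι q.1 p.2

end CartanModule


namespace CartanModule

variable {V : Type*} [LieRing V] [LieAlgebra ℝ V]
  {Ω : Type*} [AddCommGroup Ω] [Module ℝ Ω]

theorem ι_swap (C : CartanModule V Ω) (u v : V) (α : Ω) :
    C.ι u (C.ι v α) = - C.ι v (C.ι u α) := by
  have h := C.ι_ι (u + v) α
  simp only [map_add, LinearMap.add_apply, C.ι_ι, add_zero, zero_add] at h
  linear_combination (norm := module) h

end CartanModule

/-- For a closed 3-form `ω`, the Jacobiator of the `ω`-twisted
Courant bracket is exact: the cyclic sum of iterated brackets equals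
`(0, ⅙ d(⟨⟦e₁,e₂⟧,e₃⟩ + ⟨⟦e₂,e₃⟧,e₁⟩ + ⟨⟦e₃,e₁⟧,e₂⟩))`; in particular the failure
of the Jacobi identity is an exact 1-form. -/
theorem courant_jacobiator_exact
    {V : Type*} [LieRing V] [LieAlgebra ℝ V]
    {Ω : Type*} [AddCommGroup Ω] [Module ℝ Ω]
    (C : CartanModule V Ω) (ω : Ω) (hω : C.d ω = 0) (e₁ e₂ e₃ : V × Ω) :
    C.courantBracket ω (C.courantBracket ω e₁ e₂) e₃
      + C.courantBracket ω (C.courantBracket ω e₂ e₃) e₁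
      + C.courantBracket ω (C.courantBracket ω e₃ e₁) e₂
      = ((0 : V),
          (6 : ℝ)⁻¹ • C.d
            (C.courantPairing (C.courantBracket ω e₁ e₂) e₃
              + C.courantPairing (C.courantBracket ω e₂ e₃) e₁
              + C.courantPairing (C.courantBracket ω e₃ e₁) e₂)) := by
  obtain ⟨v₁, θ₁⟩ := e₁
  obtain ⟨v₂, θ₂⟩ := e₂
  obtain ⟨v₃, θ₃⟩ := e₃
  simp only [CartanModule.courantBracket, CartanModule.courantPairing, CartanModule.lieD,
    Prod.mk_add_mk, Prod.mk.injEq]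
  constructor
  · rw [← lie_skew ⁅v₁, v₂⁆ v₃, ← lie_skew ⁅v₂, v₃⁆ v₁, ← lie_skew ⁅v₃, v₁⁆ v₂]
    linear_combination (norm := module) - lie_jacobi v₁ v₂ v₃
  · rw [C.ι_swap v₃ ⁅v₁, v₂⁆ ω, C.ι_swap v₁ ⁅v₂, v₃⁆ ω]
    have h1 : C.d (C.ι v₁ (C.ι v₂ (C.d θ₃))) = - C.d (C.ι v₂ (C.ι v₁ (C.d θ₃))) := by
      rw [C.ι_swap v₁ v₂]; simp only [map_neg]
    have h2 : C.d (C.ι v₁ (C.ι v₃ (C.d θ₂))) = - C.d (C.ι v₃ (C.ι v₁ (C.d θ₂))) := by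
      rw [C.ι_swap v₁ v₃]; simp only [map_neg]
    have h3 : C.d (C.ι v₂ (C.ι v₃ (C.d θ₁))) = - C.d (C.ι v₃ (C.ι v₂ (C.d θ₁))) := by
      rw [C.ι_swap v₂ v₃]; simp only [map_neg]
    have h4 : C.ι v₁ (C.d (C.ι v₂ (C.ι v₃ ω))) = - C.ι v₁ (C.d (C.ι v₃ (C.ι v₂ ω))) := by
      rw [C.ι_swap v₂ v₃]; simp only [map_neg]
    have h5 : C.ι v₂ (C.ι v₃ (C.d (C.ι v₁ ω))) = - C.ι v₃ (C.ι v₂ (C.d (C.ι v₁ ω))) :=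
      C.ι_swap v₂ v₃ _
    have h6 : C.d (C.ι v₁ (C.ι v₂ (C.ι v₃ ω))) = - C.d (C.ι v₂ (C.ι v₁ (C.ι v₃ ω))) := by
      rw [C.ι_swap v₁ v₂]; simp only [map_neg]
    have h7 : C.d (C.ι v₁ (C.ι v₂ (C.ι v₃ ω))) = - C.d (C.ι v₁ (C.ι v₃ (C.ι v₂ ω))) := by
      rw [C.ι_swap v₂ v₃]; simp only [map_neg]
    have h8 : C.d (C.ι v₂ (C.ι v₁ (C.ι v₃ ω))) = - C.d (C.ι v₂ (C.ι v₃ (C.ι v₁ ω))) := by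
      rw [C.ι_swap v₁ v₃]; simp only [map_neg]
    have h9 : C.d (C.ι v₂ (C.ι v₃ (C.ι v₁ ω))) = - C.d (C.ι v₃ (C.ι v₂ (C.ι v₁ ω))) := by
      rw [C.ι_swap v₂ v₃]; simp only [map_neg]
    simp only [C.cartan_comm, hω, map_zero, map_add, map_sub, map_neg, map_smul,
      C.d_sq, C.ι_ι, smul_zero, neg_zero, add_zero, zero_add, sub_zero, zero_sub, neg_neg]
    linear_combination (norm := module)
      (3 : ℝ)⁻¹ • h1 + (3 : ℝ)⁻¹ • h2 + (3 : ℝ)⁻¹ • h3 + h4 - h5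
        + (3 : ℝ)⁻¹ • h6 + (2/3 : ℝ) • h7 + (3 : ℝ)⁻¹ • h8 + (2/3 : ℝ) • h9
end
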